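/- Let K ∈ [0, 1/2], let C be a penalty function with C(x) ≤ K for all x, and let X be the associated non-decreasing equilibrium demand (pointwise maximizer of x(v-x/2)-C(x)). Then ∫₀¹ (v - X(v))² dv ≤ (2K)^{3/2}/3. Consequently the uninformed traders' expected losses |G| = 1/6 - (1/2)∫₀¹(v - X(v))² dv satisfy |G| ≥ (1/6)(1 - (2K)^{3/2}). -/

import Mathlib

open Set MeasureTheory intervalIntegral Filter

private lemma sqrt_subadd (x y : ℝ) (hx : 0 ≤ x) (hy : 0 ≤ y) :
    Real.sqrt (x + y) ≤ Real.sqrt x + Real.sqrt y := by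
  have h : x + y ≤ (Real.sqrt x + Real.sqrt y) ^ 2 := by
    nlinarith [Real.sq_sqrt hx, Real.sq_sqrt hy, Real.sqrt_nonneg x, Real.sqrt_nonneg y]
  calc Real.sqrt (x + y) ≤ Real.sqrt ((Real.sqrt x + Real.sqrt y) ^ 2) := Real.sqrt_le_sqrt h
    _ = Real.sqrt x + Real.sqrt y := Real.sqrt_sq (by positivity)

private lemma alg_step (a b : ℝ) (ha : 0 ≤ a) (hab : a ≤ b) :
    Real.sqrt (2*a) * (b - a) ≤
      (2*b * Real.sqrt (2*b) - 2*a * Real.sqrt (2*a)) / 3 := by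
  have hb : (0:ℝ) ≤ b := ha.trans hab
  have hp : Real.sqrt (2*a) ^ 2 = 2*a := Real.sq_sqrt (by linarith)
  have hq : Real.sqrt (2*b) ^ 2 = 2*b := Real.sq_sqrt (by linarith)
  have hpq : Real.sqrt (2*a) ≤ Real.sqrt (2*b) := Real.sqrt_le_sqrt (by linarith)
  nlinarith [sq_nonneg (Real.sqrt (2*b) - Real.sqrt (2*a)), Real.sqrt_nonneg (2*a),
    Real.sqrt_nonneg (2*b)]

private lemma core (f : ℝ → ℝ)
    (hint : MeasureTheory.IntegrableOn f (Set.Icc 0 1))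
    (h0 : ∀ v ∈ Set.Icc (0:ℝ) 1, 0 ≤ f v)
    (h1 : ∀ v ∈ Set.Icc (0:ℝ) 1, f v ≤ v)
    (hsl : ∀ u v : ℝ, 0 ≤ u → u ≤ v → v ≤ 1 → f v ≤ f u + (v - u)) :
    ∫ v in (0:ℝ)..1, (f v)^2 ≤
      2 * (∫ v in (0:ℝ)..1, f v) * Real.sqrt (2 * ∫ v in (0:ℝ)..1, f v) / 3 := by
  have hii : ∀ a b : ℝ, 0 ≤ a → a ≤ b → b ≤ 1 → IntervalIntegrable f volume a b := by
    intro a b ha hab hb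
    rw [intervalIntegrable_iff_integrableOn_Icc_of_le hab]
    exact hint.mono_set (Icc_subset_Icc ha hb)
  have hint2 : MeasureTheory.IntegrableOn (fun v => (f v)^2) (Set.Icc 0 1) := by
    apply MeasureTheory.Integrable.mono hint
    · exact ((hint.aestronglyMeasurable.mul hint.aestronglyMeasurable).congr
        (MeasureTheory.ae_of_all _ (fun v => by simp [Pi.mul_apply]; ring)))
    · filter_upwards [MeasureTheory.ae_restrict_mem measurableSet_Icc] with v hv
      have h0' := h0 v hv
      have h1' := (h1 v hv).trans hv.2
      have hfv2 : (0:ℝ) ≤ f v ^ 2 := by positivity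
      simp only [Real.norm_eq_abs, abs_of_nonneg h0', abs_of_nonneg hfv2]
      nlinarith
  have hii2 : ∀ a b : ℝ, 0 ≤ a → a ≤ b → b ≤ 1 →
      IntervalIntegrable (fun v => (f v)^2) volume a b := by
    intro a b ha hab hb
    rw [intervalIntegrable_iff_integrableOn_Icc_of_le hab]
    exact hint2.mono_set (Icc_subset_Icc ha hb)
  set F : ℝ → ℝ := fun v => ∫ t in (0:ℝ)..v, f t with hF
  have hFadd : ∀ a b : ℝ, 0 ≤ a → a ≤ b → b ≤ 1 → F b - F a = ∫ t in a..b, f t := by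
    intro a b ha hab hb
    have h1' : IntervalIntegrable f volume 0 a := hii 0 a le_rfl ha (hab.trans hb)
    have h2' : IntervalIntegrable f volume a b := hii a b ha hab hb
    have := integral_add_adjacent_intervals h1' h2'
    simp only [hF]
    linarith
  have hseg_nn : ∀ a b : ℝ, 0 ≤ a → a ≤ b → b ≤ 1 → 0 ≤ ∫ t in a..b, f t := by
    intro a b ha hab hb
    exact integral_nonneg hab (fun t ht => h0 t ⟨ha.trans ht.1, ht.2.trans hb⟩)
  have hseg_le : ∀ a b : ℝ, 0 ≤ a → a ≤ b → b ≤ 1 → (∫ t in a..b, f t) ≤ b - a := by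
    intro a b ha hab hb
    calc (∫ t in a..b, f t) ≤ ∫ t in a..b, (1:ℝ) := by
          apply integral_mono_on hab (hii a b ha hab hb) _root_.intervalIntegrable_const
          intro t ht
          exact (h1 t ⟨ha.trans ht.1, ht.2.trans hb⟩).trans (ht.2.trans hb)
      _ = b - a := by simp
  have hFnn : ∀ v ∈ Set.Icc (0:ℝ) 1, 0 ≤ F v := by
    intro v hv
    exact hseg_nn 0 v le_rfl hv.1 hv.2
  -- key pointwise inequality: f v ^ 2 ≤ 2 F v
  have key : ∀ v ∈ Set.Icc (0:ℝ) 1, f v ^ 2 ≤ 2 * F v := by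
    intro v hv
    set c := v - f v with hc
    have hc0 : 0 ≤ c := by have := h1 v hv; simp only [hc]; linarith
    have hcv : c ≤ v := by have := h0 v hv; simp only [hc]; linarith
    have hlow : (∫ t in c..v, (f v - v + t)) ≤ ∫ t in c..v, f t := by
      apply integral_mono_on hcv ((_root_.intervalIntegrable_const).add intervalIntegrable_id)
        (hii c v hc0 hcv hv.2)
      intro t ht
      have := hsl t v (hc0.trans ht.1) ht.2 hv.2
      linarith
    have hcomp : (∫ t in c..v, (f v - v + t)) = f v ^ 2 / 2 := by
      rw [integral_add (_root_.intervalIntegrable_const) intervalIntegrable_id, intervalIntegral.integral_const,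
        integral_id]
      simp only [smul_eq_mul, hc]
      ring
    have hFc : 0 ≤ F c := hFnn c ⟨hc0, hcv.trans hv.2⟩
    have hFv := hFadd c v hc0 hcv hv.2
    rw [hcomp] at hlow
    linarith
  -- bound on each subinterval
  have piece : ∀ a b : ℝ, 0 ≤ a → a ≤ b → b ≤ 1 →
      (∫ t in a..b, (f t)^2) ≤ Real.sqrt (2 * F b) * (F b - F a) := by
    intro a b ha hab hb
    have step : ∀ t ∈ Set.Icc a b, (f t)^2 ≤ Real.sqrt (2 * F b) * f t := by
      intro t ht
      have ht' : t ∈ Set.Icc (0:ℝ) 1 := ⟨ha.trans ht.1, ht.2.trans hb⟩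
      have h0t := h0 t ht'
      have hFtb : F t ≤ F b := by
        have h' := hFadd t b ht'.1 ht.2 hb
        have h'' := hseg_nn t b ht'.1 ht.2 hb
        linarith
      have hftb : f t ≤ Real.sqrt (2 * F b) :=
        (Real.le_sqrt_of_sq_le (key t ht')).trans (Real.sqrt_le_sqrt (by linarith))
      nlinarith
    calc (∫ t in a..b, (f t)^2) ≤ ∫ t in a..b, Real.sqrt (2 * F b) * f t :=
          integral_mono_on hab (hii2 a b ha hab hb) ((hii a b ha hab hb).const_mul _) step
      _ = Real.sqrt (2 * F b) * ∫ t in a..b, f t := integral_const_mul _ _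
      _ = Real.sqrt (2 * F b) * (F b - F a) := by rw [hFadd a b ha hab hb]
  set I := ∫ v in (0:ℝ)..1, f v with hI
  have hIF : F 1 = I := by simp [hF, hI]
  -- bound with partition of size n
  have main : ∀ n : ℕ, 1 ≤ n →
      (∫ v in (0:ℝ)..1, (f v)^2) ≤ 2 * I * Real.sqrt (2 * I) / 3 + Real.sqrt (2 / n) := by
    intro n hn
    have hn0 : (0:ℝ) < n := by exact_mod_cast hn
    set a : ℕ → ℝ := fun i => (i : ℝ) / n with ha
    have hmem : ∀ i : ℕ, i ≤ n → a i ∈ Set.Icc (0:ℝ) 1 := by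
      intro i hi
      constructor
      · positivity
      · rw [div_le_one hn0]; exact_mod_cast hi
    have hstep : ∀ i : ℕ, a (i+1) - a i = 1 / n := by
      intro i; simp only [ha]; push_cast; ring
    have hstep' : ∀ i : ℕ, a i ≤ a (i+1) := by
      intro i; have := hstep i; have : (0:ℝ) < 1 / n := by positivity
      linarith [hstep i]
    have ha0 : a 0 = 0 := by simp [ha]
    have han : a n = 1 := by rw [ha]; exact div_self (ne_of_gt hn0)
    have hsum : ∑ i ∈ Finset.range n, ∫ t in a i..a (i+1), (f t)^2
        = ∫ t in (0:ℝ)..1, (f t)^2 := by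
      rw [sum_integral_adjacent_intervals (fun k hk => hii2 _ _ (hmem k (le_of_lt hk)).1
        (hstep' k) (hmem (k+1) hk).2)]
      rw [ha0, han]
    have hpiece : ∀ i ∈ Finset.range n, (∫ t in a i..a (i+1), (f t)^2) ≤
        (2 * F (a (i+1)) * Real.sqrt (2 * F (a (i+1)))
          - 2 * F (a i) * Real.sqrt (2 * F (a i))) / 3 + Real.sqrt (2 / n) * (1 / n) := by
      intro i hi
      rw [Finset.mem_range] at hi
      have hAi := hmem i hi.le
      have hAi1 := hmem (i+1) hi
      have hFA : 0 ≤ F (a i) := hFnn _ hAi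
      have hFd : F (a (i+1)) - F (a i) = ∫ t in a i..a (i+1), f t :=
        hFadd _ _ hAi.1 (hstep' i) hAi1.2
      have hFd0 : 0 ≤ F (a (i+1)) - F (a i) := by
        rw [hFd]; exact hseg_nn _ _ hAi.1 (hstep' i) hAi1.2
      have hFdle : F (a (i+1)) - F (a i) ≤ 1 / n := by
        rw [hFd]; have := hseg_le _ _ hAi.1 (hstep' i) hAi1.2
        rw [hstep i] at this; exact this
      have hsq : Real.sqrt (2 * F (a (i+1))) ≤
          Real.sqrt (2 * F (a i)) + Real.sqrt (2 / n) := by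
        calc Real.sqrt (2 * F (a (i+1))) ≤ Real.sqrt (2 * F (a i) + 2 / n) := by
              apply Real.sqrt_le_sqrt
              have : (2:ℝ) / n = 2 * (1/n) := by ring
              rw [this]; linarith
          _ ≤ Real.sqrt (2 * F (a i)) + Real.sqrt (2 / n) :=
              sqrt_subadd _ _ (by linarith) (by positivity)
      have halg := alg_step (F (a i)) (F (a (i+1))) hFA (by linarith)
      have hp := piece (a i) (a (i+1)) hAi.1 (hstep' i) hAi1.2
      have hs0 : 0 ≤ Real.sqrt (2 / (n:ℝ)) := Real.sqrt_nonneg _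
      calc (∫ t in a i..a (i+1), (f t)^2)
          ≤ Real.sqrt (2 * F (a (i+1))) * (F (a (i+1)) - F (a i)) := hp
        _ ≤ (Real.sqrt (2 * F (a i)) + Real.sqrt (2 / n)) * (F (a (i+1)) - F (a i)) :=
            mul_le_mul_of_nonneg_right hsq hFd0
        _ ≤ (2 * F (a (i+1)) * Real.sqrt (2 * F (a (i+1)))
              - 2 * F (a i) * Real.sqrt (2 * F (a i))) / 3 + Real.sqrt (2 / n) * (1 / n) := by
            have h2 : Real.sqrt (2 / (n:ℝ)) * (F (a (i+1)) - F (a i)) ≤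
                Real.sqrt (2 / n) * (1 / n) := mul_le_mul_of_nonneg_left hFdle hs0
            nlinarith
    have := Finset.sum_le_sum hpiece
    rw [hsum] at this
    have htel : ∑ i ∈ Finset.range n,
        ((2 * F (a (i+1)) * Real.sqrt (2 * F (a (i+1)))
          - 2 * F (a i) * Real.sqrt (2 * F (a i))) / 3 + Real.sqrt (2 / n) * (1 / n))
        = 2 * I * Real.sqrt (2 * I) / 3 + Real.sqrt (2 / n) := by
      rw [Finset.sum_add_distrib, ← Finset.sum_div, Finset.sum_range_sub
        (fun i => 2 * F (a i) * Real.sqrt (2 * F (a i))), Finset.sum_const,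
        Finset.card_range, ha0, han, hIF]
      have hF0 : F 0 = 0 := by simp [hF]
      rw [hF0]
      simp only [mul_zero, zero_mul, sub_zero, nsmul_eq_mul]
      have hnne : (n:ℝ) ≠ 0 := ne_of_gt hn0
      have : (n:ℝ) * (Real.sqrt (2 / n) * (1 / n)) = Real.sqrt (2 / n) := by
        rw [show (n:ℝ) * (Real.sqrt (2 / n) * (1 / n)) = Real.sqrt (2 / n) * ((1/n) * n) by ring,
          one_div, inv_mul_cancel₀ hnne, mul_one]
      rw [this]
    rw [htel] at this
    exact this
  -- take the limit n → ∞
  have htend : Tendsto (fun n : ℕ => 2 * I * Real.sqrt (2 * I) / 3 + Real.sqrt (2 / n))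
      atTop (nhds (2 * I * Real.sqrt (2 * I) / 3 + 0)) := by
    apply Tendsto.const_add
    have h2n : Tendsto (fun n : ℕ => (2:ℝ) / n) atTop (nhds 0) :=
      tendsto_const_div_atTop_nhds_zero_nat 2
    have := h2n.sqrt
    simpa using this
  have := ge_of_tendsto htend (by
    filter_upwards [eventually_ge_atTop 1] with n hn using main n hn)
  simpa using this

/-- `C` is a penalty function. -/
def IsPenalty (C : ℝ → ℝ) : Prop :=
  (∀ x ∈ Set.Icc (-1 : ℝ) 1, 0 ≤ C x) ∧
  (∀ x ∈ Set.Icc (-1 : ℝ) 1, C (-x) = C x) ∧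
  MonotoneOn C (Set.Icc 0 1) ∧
  (∀ x ∈ Set.Icc (0 : ℝ) 1, ContinuousWithinAt C (Set.Ico 0 x) x) ∧
  C 0 = 0

theorem stmt_13 (K : ℝ) (hK : K ∈ Set.Icc (0 : ℝ) (1/2))
    (C : ℝ → ℝ) (hC : IsPenalty C)
    (hCcap : ∀ x ∈ Set.Icc (-1 : ℝ) 1, C x ≤ K)
    (X : ℝ → ℝ)
    (hXrange : ∀ v ∈ Set.Icc (-1 : ℝ) 1, X v ∈ Set.Icc (-1 : ℝ) 1)
    (hXmax : ∀ v ∈ Set.Icc (-1 : ℝ) 1, ∀ y ∈ Set.Icc (-1 : ℝ) 1,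
      y * (v - y / 2) - C y ≤ X v * (v - X v / 2) - C (X v))
    (hXmono : MonotoneOn X (Set.Icc (-1) 1)) :
    (∫ v in (0 : ℝ)..1, (v - X v) ^ 2) ≤ Real.sqrt (2 * K) ^ 3 / 3 ∧
    (1 / 6 : ℝ) - (1 / 2) * ∫ v in (0 : ℝ)..1, (v - X v) ^ 2 ≥
      (1 / 6) * (1 - Real.sqrt (2 * K) ^ 3) := by
  obtain ⟨hCnn, hCsymm, hCmono, _, hC0⟩ := hC
  obtain ⟨hK0, hK2⟩ := hK
  have h01 : Set.Icc (0:ℝ) 1 ⊆ Set.Icc (-1:ℝ) 1 := Icc_subset_Icc (by norm_num) le_rfl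
  have hmem0 : (0:ℝ) ∈ Set.Icc (-1:ℝ) 1 := by constructor <;> norm_num
  have hmem1 : (1:ℝ) ∈ Set.Icc (-1:ℝ) 1 := by constructor <;> norm_num
  -- X 0 = 0
  have hX0 : X 0 = 0 := by
    have h := hXmax 0 hmem0 0 hmem0
    have h2 := hCnn (X 0) (hXrange 0 hmem0)
    rw [hC0] at h
    nlinarith [sq_nonneg (X 0)]
  -- 0 ≤ X v on [0,1]
  have hXnn : ∀ v ∈ Set.Icc (0:ℝ) 1, 0 ≤ X v := by
    intro v hv
    have h := hXmax v (h01 hv) 0 hmem0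
    have h2 := hCnn (X v) (hXrange v (h01 hv))
    rw [hC0] at h
    by_contra hneg
    push_neg at hneg
    have h3 : X v * v ≤ 0 := mul_nonpos_of_nonpos_of_nonneg hneg.le hv.1
    have h4 : 0 < X v * X v := mul_pos_of_neg_of_neg hneg hneg
    nlinarith
  -- X v ≤ v on [0,1]
  have hXle : ∀ v ∈ Set.Icc (0:ℝ) 1, X v ≤ v := by
    intro v hv
    by_contra hgt
    push_neg at hgt
    have hXv1 : X v ≤ 1 := (hXrange v (h01 hv)).2
    have hCle : C v ≤ C (X v) := hCmono ⟨hv.1, hv.2⟩ ⟨hv.1.trans hgt.le, hXv1⟩ hgt.le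
    have h := hXmax v (h01 hv) v (h01 hv)
    have h4 : 0 < (X v - v) * (X v - v) := mul_pos (by linarith) (by linarith)
    nlinarith
  have hXmono' : MonotoneOn X (Set.Icc (0:ℝ) 1) := hXmono.mono h01
  have hXint : IntegrableOn X (Set.Icc (0:ℝ) 1) :=
    MonotoneOn.integrableOn_isCompact isCompact_Icc hXmono'
  have hXii : ∀ a b : ℝ, 0 ≤ a → a ≤ b → b ≤ 1 → IntervalIntegrable X volume a b := by
    intro a b ha hab hb
    rw [intervalIntegrable_iff_integrableOn_Icc_of_le hab]
    exact hXint.mono_set (Icc_subset_Icc ha hb)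
  -- envelope bound : 1/2 - K ≤ ∫₀¹ X
  have hXI : 1/2 - K ≤ ∫ v in (0:ℝ)..1, X v := by
    set ψ : ℝ → ℝ := fun v => X v * (v - X v / 2) - C (X v) with hψ
    have hψ1 : 1/2 - K ≤ ψ 1 := by
      have h := hXmax 1 hmem1 1 hmem1
      have h2 := hCcap 1 hmem1
      simp only [hψ]
      nlinarith
    have hψ0 : ψ 0 = 0 := by simp [hψ, hX0, hC0]
    have hstep : ∀ u ∈ Set.Icc (0:ℝ) 1, ∀ v ∈ Set.Icc (0:ℝ) 1, u ≤ v →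
        ψ v - ψ u ≤ X v * (v - u) := by
      intro u hu v hv huv
      have h := hXmax u (h01 hu) (X v) (hXrange v (h01 hv))
      simp only [hψ]
      nlinarith
    have main : ∀ n : ℕ, 1 ≤ n → 1/2 - K ≤ (∫ v in (0:ℝ)..1, X v) + 1 / n := by
      intro n hn
      have hn0 : (0:ℝ) < n := by exact_mod_cast hn
      set a : ℕ → ℝ := fun i => (i : ℝ) / n with ha
      have hmem : ∀ i : ℕ, i ≤ n → a i ∈ Set.Icc (0:ℝ) 1 := by
        intro i hi
        constructor
        · positivity
        · rw [div_le_one hn0]; exact_mod_cast hi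
      have hstepn : ∀ i : ℕ, a (i+1) - a i = 1 / n := by
        intro i; simp only [ha]; push_cast; ring
      have hstep' : ∀ i : ℕ, a i ≤ a (i+1) := by
        intro i
        have h1 : (0:ℝ) < 1 / n := by positivity
        linarith [hstepn i]
      have ha0 : a 0 = 0 := by simp [ha]
      have han : a n = 1 := by rw [ha]; exact div_self (ne_of_gt hn0)
      have hsum : ∑ i ∈ Finset.range n, ∫ t in a i..a (i+1), X t
          = ∫ t in (0:ℝ)..1, X t := by
        rw [sum_integral_adjacent_intervals (fun k hk => hXii _ _ (hmem k (le_of_lt hk)).1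
          (hstep' k) (hmem (k+1) hk).2)]
        rw [ha0, han]
      have htel1 : ∑ i ∈ Finset.range n, (ψ (a (i+1)) - ψ (a i)) = ψ 1 - ψ 0 := by
        rw [Finset.sum_range_sub (fun i => ψ (a i)), ha0, han]
      have hpiece : ∀ i ∈ Finset.range n, ψ (a (i+1)) - ψ (a i) ≤
          (∫ t in a i..a (i+1), X t) + (X (a (i+1)) - X (a i)) * (1 / n) := by
        intro i hi
        rw [Finset.mem_range] at hi
        have hAi := hmem i hi.le
        have hAi1 := hmem (i+1) hi
        have h1 : ψ (a (i+1)) - ψ (a i) ≤ X (a (i+1)) * (1 / n) := by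
          have := hstep (a i) hAi (a (i+1)) hAi1 (hstep' i)
          rw [hstepn i] at this
          exact this
        have h2 : X (a i) * (1 / n) ≤ ∫ t in a i..a (i+1), X t := by
          have hmon : ∀ t ∈ Set.Icc (a i) (a (i+1)), X (a i) ≤ X t := by
            intro t ht
            exact hXmono' hAi ⟨hAi.1.trans ht.1, ht.2.trans hAi1.2⟩ ht.1
          calc X (a i) * (1 / n) = (a (i+1) - a i) • X (a i) := by
                rw [hstepn i, smul_eq_mul]; ring
            _ = ∫ _ in a i..a (i+1), X (a i) := (intervalIntegral.integral_const _).symm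
            _ ≤ ∫ t in a i..a (i+1), X t := by
                apply integral_mono_on (hstep' i) _root_.intervalIntegrable_const
                  (hXii _ _ hAi.1 (hstep' i) hAi1.2) hmon
        nlinarith
      have hsum2 := Finset.sum_le_sum hpiece
      rw [htel1] at hsum2
      have htel2 : ∑ i ∈ Finset.range n,
          ((∫ t in a i..a (i+1), X t) + (X (a (i+1)) - X (a i)) * (1 / n))
          = (∫ t in (0:ℝ)..1, X t) + (X 1 - X 0) * (1 / n) := by
        rw [Finset.sum_add_distrib, hsum, ← Finset.sum_mul,
          Finset.sum_range_sub (fun i => X (a i)), ha0, han]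
      rw [htel2] at hsum2
      have hX1 : X 1 ≤ 1 := (hXrange 1 hmem1).2
      have hrec : (0:ℝ) < 1 / n := by positivity
      rw [hψ0, hX0] at hsum2
      nlinarith
    have htend : Tendsto (fun n : ℕ => (∫ v in (0:ℝ)..1, X v) + 1 / (n:ℝ))
        atTop (nhds ((∫ v in (0:ℝ)..1, X v) + 0)) := by
      exact Tendsto.const_add _ tendsto_one_div_atTop_nhds_zero_nat
    have := ge_of_tendsto htend (by
      filter_upwards [eventually_ge_atTop 1] with n hn using main n hn)
    simpa using this
  -- set up f and apply core
  set f : ℝ → ℝ := fun v => v - X v with hf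
  have hfint : IntegrableOn f (Set.Icc (0:ℝ) 1) := by
    exact (continuous_id.integrableOn_Icc).sub hXint
  have hf0 : ∀ v ∈ Set.Icc (0:ℝ) 1, 0 ≤ f v := by
    intro v hv; have := hXle v hv; simp only [hf]; linarith
  have hf1 : ∀ v ∈ Set.Icc (0:ℝ) 1, f v ≤ v := by
    intro v hv; have := hXnn v hv; simp only [hf]; linarith
  have hfsl : ∀ u v : ℝ, 0 ≤ u → u ≤ v → v ≤ 1 → f v ≤ f u + (v - u) := by
    intro u v hu huv hv
    have := hXmono' ⟨hu, huv.trans hv⟩ ⟨hu.trans huv, hv⟩ huv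
    simp only [hf]; linarith
  have hcore := core f hfint hf0 hf1 hfsl
  set I := ∫ v in (0:ℝ)..1, f v with hI
  have hIval : I = 1/2 - ∫ v in (0:ℝ)..1, X v := by
    rw [hI]
    simp only [hf]
    rw [intervalIntegral.integral_sub intervalIntegrable_id (hXii 0 1 le_rfl zero_le_one le_rfl),
      integral_id]
    norm_num
  have hIK : I ≤ K := by rw [hIval]; linarith
  have hInn : 0 ≤ I := by
    rw [hI]
    exact integral_nonneg zero_le_one hf0
  have hmono2 : 2 * I * Real.sqrt (2 * I) ≤ 2 * K * Real.sqrt (2 * K) := by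
    have hs := Real.sqrt_le_sqrt (by linarith : 2 * I ≤ 2 * K)
    have hs2 := Real.sqrt_nonneg (2 * I)
    nlinarith
  have hcube : Real.sqrt (2 * K) ^ 3 = 2 * K * Real.sqrt (2 * K) := by
    rw [pow_succ, Real.sq_sqrt (by linarith : (0:ℝ) ≤ 2 * K)]
  have hpart1 : (∫ v in (0 : ℝ)..1, (v - X v) ^ 2) ≤ Real.sqrt (2 * K) ^ 3 / 3 := by
    have : (∫ v in (0 : ℝ)..1, (v - X v) ^ 2) = ∫ v in (0:ℝ)..1, (f v)^2 := by
      simp only [hf]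
    rw [this, hcube]
    calc (∫ v in (0:ℝ)..1, (f v)^2) ≤ 2 * I * Real.sqrt (2 * I) / 3 := hcore
      _ ≤ 2 * K * Real.sqrt (2 * K) / 3 := by linarith
  exact ⟨hpart1, by linarith⟩
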